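/- Fix reals a ∈ [0,1) and b. For each n ≥ 1, define the spike s_n : ℕ → ℝ by s_n w = (n:ℝ)^b if |(w:ℝ) - n/4| ≤ (n:ℝ)^a/2 and s_n w = 0 otherwise, and the cost c_n(z) = |z| + s_n(|z|) on bitstrings z : Fin n → Bool, where |z| is the Hamming weight. Let C_n be the diagonal matrix with entry c_n(z) at z, let B'_n = ∑ i, X_i be the mixer sum, let u_n be the uniform vector with entries 2^{-n/2}, and let ψ_f(n) = (Matrix.exp (I·(π/4)·B'_n) * Matrix.exp (-I·(π/2)·C_n)).mulVec u_n. Then ‖ψ_f(n) 0‖² → 1 as n → ∞, where 0 is the all-false string; i.e., single-round QAOA with angles (π/4, π/2) finds the global minimum of the Hamming ramp with spike with probability tending to 1, for every spike width exponent a ∈ [0,1) and arbitrary height exponent b. -/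

import Mathlib

open Matrix Complex Filter

/-- The bit-flip (Pauli X on qubit `i`) matrix on `n`-bit strings. -/
noncomputable def pauliX (n : ℕ) (i : Fin n) :
    Matrix (Fin n → Bool) (Fin n → Bool) ℂ :=
  Matrix.of fun z z' => if z' = Function.update z i (!(z i)) then 1 else 0

/-- The mixer sum `B' = ∑ᵢ Xᵢ`. -/
noncomputable def mixerSum (n : ℕ) : Matrix (Fin n → Bool) (Fin n → Bool) ℂ :=
  ∑ i, pauliX n i

/-- The Hamming weight of a bitstring: the number of `true` bits. -/
def hammingWeight {n : ℕ} (z : Fin n → Bool) : ℕ :=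
  (Finset.univ.filter fun i => z i = true).card

/-- The rectangular spike of height `n^b` and width `n^a` centered at `n/4`. -/
noncomputable def spike (a b : ℝ) (n : ℕ) (w : ℕ) : ℝ :=
  if |(w : ℝ) - (n : ℝ) / 4| ≤ (n : ℝ) ^ a / 2 then (n : ℝ) ^ b else 0

/-- The Spike cost function `c(z) = |z| + s(|z|)` on `n`-bit strings. -/
noncomputable def spikeCost (a b : ℝ) (n : ℕ) (z : Fin n → Bool) : ℝ :=
  (hammingWeight z : ℝ) + spike a b n (hammingWeight z)

/-- The output state of QAOA1 with angles `(π/4, π/2)` on the Spike instance. -/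
noncomputable def spikeQAOAState (a b : ℝ) (n : ℕ) : (Fin n → Bool) → ℂ :=
  (NormedSpace.exp ((Complex.I * ((Real.pi : ℂ) / 4)) • mixerSum n) *
      NormedSpace.exp ((-Complex.I * ((Real.pi : ℂ) / 2)) •
        Matrix.diagonal fun z => (spikeCost a b n z : ℂ))).mulVec
    fun _ => (((2 : ℝ) ^ (-(n : ℝ) / 2) : ℝ) : ℂ)


lemma exp_mulVec_eigen {ι : Type*} [Fintype ι] [DecidableEq ι]
    (A : Matrix ι ι ℂ) (v : ι → ℂ) (μ : ℂ)
    (h : A.mulVec v = μ • v) :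
    (NormedSpace.exp A).mulVec v = Complex.exp μ • v := by
  letI : SeminormedRing (Matrix ι ι ℂ) := Matrix.linftyOpSemiNormedRing
  letI : NormedRing (Matrix ι ι ℂ) := Matrix.linftyOpNormedRing
  letI : NormedAlgebra ℂ (Matrix ι ι ℂ) := Matrix.linftyOpNormedAlgebra
  have hpow : ∀ k : ℕ, (A ^ k).mulVec v = μ ^ k • v := by
    intro k
    induction k with
    | zero => simp [Matrix.one_mulVec]
    | succ k ih =>
      rw [pow_succ, ← Matrix.mulVec_mulVec, h, Matrix.mulVec_smul, ih, smul_smul, pow_succ,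
        mul_comm]
  have hs : Summable (fun k : ℕ => ((k.factorial : ℂ))⁻¹ • A ^ k) := NormedSpace.expSeries_summable' A
  let L : Matrix ι ι ℂ →ₗ[ℂ] ι → ℂ :=
    { toFun := fun B => B.mulVec v
      map_add' := fun B C => Matrix.add_mulVec B C v
      map_smul' := fun c B => Matrix.smul_mulVec c B v }
  have hL : Continuous L := L.continuous_of_finiteDimensional
  have h2 : HasSum (fun k : ℕ => ((k.factorial : ℂ))⁻¹ • μ ^ k • v) ((NormedSpace.exp A).mulVec v) := by
    rw [NormedSpace.exp_eq_tsum ℂ]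
    have h3 := hs.hasSum.mapL ⟨L, hL⟩
    have h4 : ∀ k : ℕ, (⟨L, hL⟩ : Matrix ι ι ℂ →L[ℂ] ι → ℂ) (((k.factorial : ℂ))⁻¹ • A ^ k)
        = ((k.factorial : ℂ))⁻¹ • μ ^ k • v := by
      intro k
      rw [ContinuousLinearMap.map_smul]
      show ((k.factorial : ℂ))⁻¹ • (A ^ k).mulVec v = _
      rw [hpow]
    simp [h4] at h3; exact h3
  have h5 : HasSum (fun k : ℕ => ((k.factorial : ℂ))⁻¹ * μ ^ k) (Complex.exp μ) := by
    have hsum := (NormedSpace.expSeries_summable' (𝕂 := ℂ) μ).hasSum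
    rw [Complex.exp_eq_exp_ℂ, NormedSpace.exp_eq_tsum ℂ]
    simpa [smul_eq_mul] using hsum
  have h6 := h5.smul_const v
  simp only [← smul_smul] at h6
  exact h2.unique h6


noncomputable def chi {n : ℕ} (y z : Fin n → Bool) : ℂ :=
  ∏ i, (if y i = true ∧ z i = true then -1 else 1)

lemma pauliX_mulVec {n : ℕ} (i : Fin n) (f : (Fin n → Bool) → ℂ) :
    (pauliX n i).mulVec f = fun z => f (Function.update z i (!(z i))) := by
  funext z
  simp [pauliX, Matrix.mulVec, dotProduct, ite_mul]

lemma chi_update {n : ℕ} (y z : Fin n → Bool) (i : Fin n) :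
    chi y (Function.update z i (!(z i))) = (if y i = true then -1 else 1) * chi y z := by
  unfold chi
  rw [← Finset.mul_prod_erase Finset.univ _ (Finset.mem_univ i),
    ← Finset.mul_prod_erase Finset.univ (fun j => if y j = true ∧ z j = true then (-1:ℂ) else 1)
      (Finset.mem_univ i), ← mul_assoc]
  congr 1
  · simp only [Function.update_self]
    cases hy : y i <;> cases hz : z i <;> simp
  · exact Finset.prod_congr rfl fun j hj => by
      rw [Function.update_of_ne (Finset.ne_of_mem_erase hj)]

lemma sum_pm {n : ℕ} (y : Fin n → Bool) :
    ∑ i, (if y i = true then (-1:ℂ) else 1) = (n : ℂ) - 2 * (hammingWeight y : ℂ) := by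
  have hc := Finset.card_filter_add_card_filter_not (s := Finset.univ)
    (p := fun i : Fin n => y i = true)
  rw [Finset.card_univ, Fintype.card_fin] at hc
  rw [Finset.sum_ite, Finset.sum_const, Finset.sum_const]
  have h1 : ((Finset.univ.filter fun i : Fin n => y i = true).card : ℂ) = (hammingWeight y : ℂ) := by
    norm_cast
  have h2 : ((Finset.univ.filter fun i : Fin n => ¬ y i = true).card : ℂ)
      = (n : ℂ) - (hammingWeight y : ℂ) := by
    have : ((Finset.univ.filter fun i : Fin n => y i = true).card : ℂ)
        + ((Finset.univ.filter fun i : Fin n => ¬ y i = true).card : ℂ) = (n : ℂ) := by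
      exact_mod_cast congrArg (fun m : ℕ => (m : ℂ)) hc
    rw [h1] at this; linear_combination this
  rw [nsmul_eq_mul, nsmul_eq_mul, h1, h2]; ring

lemma mixerSum_mulVec_chi {n : ℕ} (y : Fin n → Bool) :
    (mixerSum n).mulVec (chi y) = ((n : ℂ) - 2 * (hammingWeight y : ℂ)) • chi y := by
  funext z
  have : (mixerSum n).mulVec (chi y) = ∑ i, (pauliX n i).mulVec (chi y) := by
    unfold mixerSum
    induction (Finset.univ : Finset (Fin n)) using Finset.induction with
    | empty => simp [Matrix.zero_mulVec]
    | insert _ _ h ih => rw [Finset.sum_insert h, Finset.sum_insert h, Matrix.add_mulVec, ih]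
  rw [this]
  rw [← sum_pm y]
  simp only [Finset.sum_apply, pauliX_mulVec, Pi.smul_apply, smul_eq_mul, Finset.sum_mul]
  exact Finset.sum_congr rfl fun i _ => by rw [chi_update]

lemma sum_prod_pi_bool {R : Type*} [CommSemiring R] (n : ℕ) (g : Fin n → Bool → R) :
    ∑ y : Fin n → Bool, ∏ i, g i (y i) = ∏ i, (g i true + g i false) := by
  rw [← Fintype.piFinset_univ, ← Finset.prod_univ_sum]
  simp

lemma chi_zero {n : ℕ} (y : Fin n → Bool) : chi y (fun _ => false) = 1 := by
  simp [chi]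

lemma sum_chi_mul_chi {n : ℕ} (z z₁ : Fin n → Bool) :
    ∑ y : Fin n → Bool, chi y z * chi y z₁ = if z = z₁ then (2:ℂ)^n else 0 := by
  have h : ∀ y : Fin n → Bool, chi y z * chi y z₁
      = ∏ i, ((if y i = true ∧ z i = true then (-1:ℂ) else 1) *
          (if y i = true ∧ z₁ i = true then (-1:ℂ) else 1)) :=
    fun y => (Finset.prod_mul_distrib).symm
  simp only [h]
  rw [sum_prod_pi_bool n (fun i b => (if b = true ∧ z i = true then (-1:ℂ) else 1) *
    (if b = true ∧ z₁ i = true then (-1:ℂ) else 1))]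
  have h2 : (∏ i : Fin n, ((if true = true ∧ z i = true then (-1:ℂ) else 1) *
        (if true = true ∧ z₁ i = true then (-1:ℂ) else 1) +
      (if false = true ∧ z i = true then (-1:ℂ) else 1) *
        (if false = true ∧ z₁ i = true then (-1:ℂ) else 1)))
      = ∏ i : Fin n, (if z i = z₁ i then (2:ℂ) else 0) := by
    refine Finset.prod_congr rfl fun i _ => ?_
    cases hz : z i <;> cases hz1 : z₁ i <;> simp [hz, hz1] <;> norm_num
  rw [h2]
  by_cases hzz : z = z₁
  · subst hzz
    simp [Finset.prod_const, Finset.card_univ]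
  · obtain ⟨i, hi⟩ := Function.ne_iff.mp hzz
    rw [if_neg hzz]
    exact Finset.prod_eq_zero (Finset.mem_univ i) (by simp [hi])

lemma sum_chi_exp {n : ℕ} (z : Fin n → Bool) :
    ∑ y : Fin n → Bool, chi y z *
        Complex.exp (Complex.I * ((Real.pi : ℂ)/4) * ((n : ℂ) - 2 * (hammingWeight y : ℂ)))
      = ((Real.sqrt 2 : ℝ) : ℂ)^n * Complex.I ^ hammingWeight z := by
  have e1 : Complex.exp (Complex.I * ((Real.pi : ℂ)/4) * 1)
      = ((Real.sqrt 2 / 2 : ℝ) : ℂ) + ((Real.sqrt 2 / 2 : ℝ) : ℂ) * Complex.I := by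
    rw [show Complex.I * ((Real.pi : ℂ)/4) * 1 = ((Real.pi/4 : ℝ) : ℂ) * Complex.I by
      push_cast; ring]
    rw [Complex.exp_mul_I, ← Complex.ofReal_cos, ← Complex.ofReal_sin,
      Real.cos_pi_div_four, Real.sin_pi_div_four]
  have e2 : Complex.exp (Complex.I * ((Real.pi : ℂ)/4) * (-1))
      = ((Real.sqrt 2 / 2 : ℝ) : ℂ) - ((Real.sqrt 2 / 2 : ℝ) : ℂ) * Complex.I := by
    rw [show Complex.I * ((Real.pi : ℂ)/4) * (-1) = ((-(Real.pi/4) : ℝ) : ℂ) * Complex.I by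
      push_cast; ring]
    rw [Complex.exp_mul_I, ← Complex.ofReal_cos, ← Complex.ofReal_sin, Real.cos_neg,
      Real.sin_neg, Real.cos_pi_div_four, Real.sin_pi_div_four]
    push_cast; ring
  have key : ∀ y : Fin n → Bool, chi y z *
      Complex.exp (Complex.I * ((Real.pi : ℂ)/4) * ((n : ℂ) - 2 * (hammingWeight y : ℂ)))
      = ∏ i, ((if y i = true ∧ z i = true then (-1:ℂ) else 1) *
          Complex.exp (Complex.I * ((Real.pi : ℂ)/4) * (if y i = true then (-1:ℂ) else 1))) := by
    intro y
    rw [← sum_pm y, Finset.mul_sum, Complex.exp_sum, chi, Finset.prod_mul_distrib]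
  simp only [key]
  rw [sum_prod_pi_bool n (fun i b => (if b = true ∧ z i = true then (-1:ℂ) else 1) *
    Complex.exp (Complex.I * ((Real.pi : ℂ)/4) * (if b = true then (-1:ℂ) else 1)))]
  have h2 : (∏ i : Fin n, ((if true = true ∧ z i = true then (-1:ℂ) else 1) *
        Complex.exp (Complex.I * ((Real.pi : ℂ)/4) * (if true = true then (-1:ℂ) else 1)) +
      (if false = true ∧ z i = true then (-1:ℂ) else 1) *
        Complex.exp (Complex.I * ((Real.pi : ℂ)/4) * (if false = true then (-1:ℂ) else 1))))
      = ∏ i : Fin n, (((Real.sqrt 2 : ℝ) : ℂ) * (if z i = true then Complex.I else 1)) := by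
    refine Finset.prod_congr rfl fun i _ => ?_
    cases hz : z i <;>
      simp only [hz, Bool.false_eq_true, false_and, if_false, and_true, true_and, if_true,
        and_self, and_false, one_mul, eq_self_iff_true] <;>
      rw [e1, e2] <;> push_cast <;> ring
  rw [h2]
  rw [Finset.prod_mul_distrib, Finset.prod_const, Finset.card_univ, Fintype.card_fin,
    Finset.prod_ite, Finset.prod_const, Finset.prod_const, one_pow, mul_one]
  rfl

lemma sum_half_pow (n : ℕ) :
    ∑ z : Fin n → Bool, ((1:ℝ)/2) ^ hammingWeight z = (3/2)^n := by
  have h : ∀ z : Fin n → Bool,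
      ((1:ℝ)/2)^hammingWeight z = ∏ i, (if z i = true then (1/2:ℝ) else 1) := by
    intro z
    rw [Finset.prod_ite, Finset.prod_const, Finset.prod_const, one_pow, mul_one]; rfl
  simp only [h]
  rw [sum_prod_pi_bool n (fun _ b => if b = true then (1/2:ℝ) else 1)]
  norm_num [Finset.prod_const, Finset.card_univ, div_pow]

lemma psi_zero (a b : ℝ) (n : ℕ) :
    spikeQAOAState a b n (fun _ => false)
      = (((2:ℝ)^n : ℝ) : ℂ)⁻¹ * ∑ z : Fin n → Bool,
          Complex.exp (-Complex.I * ((Real.pi : ℂ)/2) * ((spike a b n (hammingWeight z) : ℝ) : ℂ)) := by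
  classical
  unfold spikeQAOAState
  set u₀ : ℂ := (((2 : ℝ) ^ (-(n : ℝ) / 2) : ℝ) : ℂ) with hu₀
  set d : (Fin n → Bool) → ℂ :=
    fun z => Complex.exp (-Complex.I * ((Real.pi : ℂ)/2) * (spikeCost a b n z : ℂ)) with hd
  set M : Matrix (Fin n → Bool) (Fin n → Bool) ℂ :=
    (Complex.I * ((Real.pi : ℂ) / 4)) • mixerSum n with hM
  set c : ℂ := (((2:ℝ)^n : ℝ) : ℂ) with hc
  have hc0 : c ≠ 0 := by
    rw [hc]; norm_cast; positivity
  -- step 1 : the diagonal exponential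
  have hdiag : NormedSpace.exp ((-Complex.I * ((Real.pi : ℂ) / 2)) •
      Matrix.diagonal fun z => (spikeCost a b n z : ℂ)) = Matrix.diagonal d := by
    have harg : NormedSpace.exp ((-Complex.I * ((Real.pi : ℂ) / 2)) •
        fun z : Fin n → Bool => (spikeCost a b n z : ℂ)) = d := by
      funext z
      rw [Pi.coe_exp, Pi.smul_apply, smul_eq_mul, ← Complex.exp_eq_exp_ℂ]
    rw [← Matrix.diagonal_smul, Matrix.exp_diagonal, harg]
  have hdmul : (Matrix.diagonal d).mulVec (fun _ => u₀) = fun z => d z * u₀ :=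
    funext fun z => Matrix.mulVec_diagonal d (fun _ => u₀) z
  set w : (Fin n → Bool) → ℂ := fun z => d z * u₀ with hw
  have step1 : (NormedSpace.exp M * NormedSpace.exp ((-Complex.I * ((Real.pi : ℂ) / 2)) •
        Matrix.diagonal fun z => (spikeCost a b n z : ℂ))).mulVec (fun _ => u₀)
      = (NormedSpace.exp M).mulVec w := by
    rw [← Matrix.mulVec_mulVec, hdiag, hdmul]
  rw [step1]
  -- eigenvalues
  have hexpM : ∀ y : Fin n → Bool, (NormedSpace.exp M).mulVec (chi y)
      = Complex.exp (Complex.I * ((Real.pi : ℂ)/4) * ((n : ℂ) - 2 * (hammingWeight y : ℂ))) • chi y := by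
    intro y
    refine exp_mulVec_eigen M (chi y) _ ?_
    rw [hM, Matrix.smul_mulVec, mixerSum_mulVec_chi, smul_smul]
  -- decomposition of the vector w
  set coef : (Fin n → Bool) → ℂ := fun y => c⁻¹ * ∑ z, chi y z * w z with hcoef
  have hdecomp : w = ∑ y : Fin n → Bool, coef y • chi y := by
    funext z₁
    rw [Finset.sum_apply]
    simp only [Pi.smul_apply, smul_eq_mul, hcoef]
    symm
    calc ∑ y : Fin n → Bool, (c⁻¹ * ∑ z, chi y z * w z) * chi y z₁
        = ∑ y : Fin n → Bool, ∑ z, c⁻¹ * (chi y z * chi y z₁) * w z := by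
          refine Finset.sum_congr rfl fun y _ => ?_
          rw [Finset.mul_sum, Finset.sum_mul]
          all_goals exact Finset.sum_congr rfl fun z _ => by ring
      _ = ∑ z, ∑ y : Fin n → Bool, c⁻¹ * (chi y z * chi y z₁) * w z := Finset.sum_comm
      _ = ∑ z, c⁻¹ * (∑ y, chi y z * chi y z₁) * w z := by
          refine Finset.sum_congr rfl fun z _ => ?_
          rw [Finset.mul_sum, Finset.sum_mul]
          all_goals exact Finset.sum_congr rfl fun y _ => by ring
      _ = w z₁ := by
          simp only [sum_chi_mul_chi]
          rw [Finset.sum_eq_single z₁]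
          · rw [if_pos rfl, hc]
            push_cast
            field_simp
          · intro z _ hz
            rw [if_neg hz, mul_zero, zero_mul]
          · intro h; exact absurd (Finset.mem_univ z₁) h
  -- apply the unitary
  have step2 : (NormedSpace.exp M).mulVec w
      = ∑ y : Fin n → Bool, coef y •
          (Complex.exp (Complex.I * ((Real.pi : ℂ)/4) * ((n : ℂ) - 2 * (hammingWeight y : ℂ))) • chi y) := by
    conv_lhs => rw [hdecomp]
    have := map_sum ((NormedSpace.exp M).mulVecLin)
      (fun y : Fin n → Bool => coef y • chi y) Finset.univ
    simp only [Matrix.mulVecLin_apply, LinearMap.map_smul] at this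
    rw [this]
    exact Finset.sum_congr rfl fun y _ => by rw [hexpM y]
  -- evaluate at 0
  have step3 : (NormedSpace.exp M).mulVec w (fun _ => false)
      = ∑ y : Fin n → Bool, coef y *
          Complex.exp (Complex.I * ((Real.pi : ℂ)/4) * ((n : ℂ) - 2 * (hammingWeight y : ℂ))) := by
    rw [step2, Finset.sum_apply]
    exact Finset.sum_congr rfl fun y _ => by
      simp [chi_zero, smul_eq_mul]
  rw [step3]
  -- swap sums and use sum_chi_exp
  have step4 : ∑ y : Fin n → Bool, coef y *
        Complex.exp (Complex.I * ((Real.pi : ℂ)/4) * ((n : ℂ) - 2 * (hammingWeight y : ℂ)))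
      = c⁻¹ * ∑ z : Fin n → Bool,
          (((Real.sqrt 2 : ℝ) : ℂ)^n * Complex.I ^ hammingWeight z) * w z := by
    simp only [hcoef]
    calc ∑ y : Fin n → Bool, (c⁻¹ * ∑ z, chi y z * w z) *
          Complex.exp (Complex.I * ((Real.pi : ℂ)/4) * ((n : ℂ) - 2 * (hammingWeight y : ℂ)))
        = ∑ y : Fin n → Bool, ∑ z, c⁻¹ *
            (chi y z * Complex.exp (Complex.I * ((Real.pi : ℂ)/4) * ((n : ℂ) - 2 * (hammingWeight y : ℂ)))) * w z := by
          refine Finset.sum_congr rfl fun y _ => ?_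
          rw [Finset.mul_sum, Finset.sum_mul]
          all_goals exact Finset.sum_congr rfl fun z _ => by ring
      _ = ∑ z, ∑ y : Fin n → Bool, c⁻¹ *
            (chi y z * Complex.exp (Complex.I * ((Real.pi : ℂ)/4) * ((n : ℂ) - 2 * (hammingWeight y : ℂ)))) * w z := Finset.sum_comm
      _ = ∑ z, c⁻¹ * (∑ y : Fin n → Bool,
            chi y z * Complex.exp (Complex.I * ((Real.pi : ℂ)/4) * ((n : ℂ) - 2 * (hammingWeight y : ℂ)))) * w z := by
          refine Finset.sum_congr rfl fun z _ => ?_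
          rw [Finset.mul_sum, Finset.sum_mul]
          all_goals exact Finset.sum_congr rfl fun y _ => by ring
      _ = c⁻¹ * ∑ z : Fin n → Bool,
            (((Real.sqrt 2 : ℝ) : ℂ)^n * Complex.I ^ hammingWeight z) * w z := by
          rw [Finset.mul_sum]
          exact Finset.sum_congr rfl fun z _ => by rw [sum_chi_exp, mul_assoc]
  rw [step4]
  congr 1
  refine Finset.sum_congr rfl fun z _ => ?_
  -- per-term simplification
  have hcost : (spikeCost a b n z : ℂ)
      = (hammingWeight z : ℂ) + ((spike a b n (hammingWeight z) : ℝ) : ℂ) := by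
    simp only [spikeCost]
    push_cast
    ring
  have hsplit : d z = Complex.exp (-Complex.I * ((Real.pi : ℂ)/2) * (hammingWeight z : ℂ)) *
      Complex.exp (-Complex.I * ((Real.pi : ℂ)/2) * ((spike a b n (hammingWeight z) : ℝ) : ℂ)) := by
    simp only [hd]
    rw [hcost, show -Complex.I * ((Real.pi : ℂ)/2) *
        ((hammingWeight z : ℂ) + ((spike a b n (hammingWeight z) : ℝ) : ℂ))
      = -Complex.I * ((Real.pi : ℂ)/2) * (hammingWeight z : ℂ)
        + -Complex.I * ((Real.pi : ℂ)/2) * ((spike a b n (hammingWeight z) : ℝ) : ℂ) by ring,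
      Complex.exp_add]
  have hmI : Complex.exp (-Complex.I * ((Real.pi : ℂ)/2) * (hammingWeight z : ℂ))
      = (-Complex.I) ^ hammingWeight z := by
    rw [show -Complex.I * ((Real.pi : ℂ)/2) * (hammingWeight z : ℂ)
        = ((hammingWeight z : ℕ) : ℂ) * (-Complex.I * ((Real.pi : ℂ)/2)) by push_cast; ring]
    rw [Complex.exp_nat_mul]
    congr 1
    rw [show -Complex.I * ((Real.pi : ℂ)/2) = ((-(Real.pi/2) : ℝ) : ℂ) * Complex.I by
      push_cast; ring]
    rw [Complex.exp_mul_I, ← Complex.ofReal_cos, ← Complex.ofReal_sin, Real.cos_neg,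
      Real.sin_neg, Real.cos_pi_div_two, Real.sin_pi_div_two]
    push_cast; ring
  have hr : (Real.sqrt 2)^n * (2:ℝ) ^ (-(n:ℝ)/2) = 1 := by
    rw [Real.sqrt_eq_rpow, ← Real.rpow_natCast ((2:ℝ) ^ ((1:ℝ)/(2:ℝ))) n,
      ← Real.rpow_mul (by norm_num : (0:ℝ) ≤ 2), ← Real.rpow_add (by norm_num : (0:ℝ) < 2),
      show (1:ℝ)/2 * (n:ℝ) + -(n:ℝ)/2 = 0 by ring, Real.rpow_zero]
  have hsqrt : ((Real.sqrt 2 : ℝ) : ℂ)^n * u₀ = 1 := by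
    rw [hu₀, ← Complex.ofReal_pow, ← Complex.ofReal_mul, hr, Complex.ofReal_one]
  calc (((Real.sqrt 2 : ℝ) : ℂ)^n * Complex.I ^ hammingWeight z) * w z
      = (Complex.I ^ hammingWeight z * (-Complex.I) ^ hammingWeight z) *
          Complex.exp (-Complex.I * ((Real.pi : ℂ)/2) * ((spike a b n (hammingWeight z) : ℝ) : ℂ)) *
          (((Real.sqrt 2 : ℝ) : ℂ)^n * u₀) := by
        simp only [hw]
        rw [hsplit, hmI]
        ring
    _ = Complex.exp (-Complex.I * ((Real.pi : ℂ)/2) * ((spike a b n (hammingWeight z) : ℝ) : ℂ)) := by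
        rw [hsqrt, ← mul_pow]
        simp [Complex.I_mul_I]

lemma key_bound (a b : ℝ) (n : ℕ) :
    ‖spikeQAOAState a b n (fun _ => false) - 1‖
      ≤ ((2:ℝ)^n)⁻¹ * (2 * (2:ℝ) ^ ((n:ℝ)/4 + (n:ℝ)^a/2) * (3/2)^n) := by
  classical
  have hcard : (Finset.univ : Finset (Fin n → Bool)).card = 2^n := by
    simp [Finset.card_univ, Fintype.card_fun]
  set e : (Fin n → Bool) → ℂ := fun z =>
    Complex.exp (-Complex.I * ((Real.pi : ℂ)/2) * ((spike a b n (hammingWeight z) : ℝ) : ℂ)) with he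
  have hone : (((2:ℝ)^n : ℝ) : ℂ)⁻¹ * ∑ _z : Fin n → Bool, (1:ℂ) = 1 := by
    rw [Finset.sum_const, hcard, nsmul_eq_mul, mul_one]
    have hne : ((((2:ℝ)^n : ℝ)) : ℂ) ≠ 0 := by
      exact_mod_cast (by positivity : ((2:ℝ)^n : ℝ) ≠ 0)
    rw [show ((2^n : ℕ) : ℂ) = ((((2:ℝ)^n : ℝ)) : ℂ) by push_cast; ring]
    exact inv_mul_cancel₀ hne
  have hdiff : spikeQAOAState a b n (fun _ => false) - 1
      = (((2:ℝ)^n : ℝ) : ℂ)⁻¹ * ∑ z : Fin n → Bool, (e z - 1) := by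
    rw [psi_zero, Finset.sum_sub_distrib, mul_sub, hone]
  rw [hdiff]
  have hnorm1 : ‖(((2:ℝ)^n : ℝ) : ℂ)⁻¹‖ = ((2:ℝ)^n)⁻¹ := by
    rw [norm_inv, Complex.norm_real, Real.norm_eq_abs, abs_of_pos (by positivity)]
  rw [norm_mul, hnorm1]
  refine mul_le_mul_of_nonneg_left ?_ (by positivity)
  calc ‖∑ z : Fin n → Bool, (e z - 1)‖ ≤ ∑ z : Fin n → Bool, ‖e z - 1‖ :=
        norm_sum_le _ _
    _ ≤ ∑ z : Fin n → Bool,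
          (if |(hammingWeight z : ℝ) - (n:ℝ)/4| ≤ (n:ℝ)^a/2 then (2:ℝ) else 0) := by
        refine Finset.sum_le_sum fun z _ => ?_
        by_cases hcond : |(hammingWeight z : ℝ) - (n:ℝ)/4| ≤ (n:ℝ)^a/2
        · rw [if_pos hcond]
          refine (norm_sub_le _ _).trans ?_
          have : ‖e z‖ = 1 := by
            rw [he]
            simp only []
            rw [show -Complex.I * ((Real.pi : ℂ)/2) * ((spike a b n (hammingWeight z) : ℝ) : ℂ)
                = ((-(Real.pi/2) * spike a b n (hammingWeight z) : ℝ) : ℂ) * Complex.I by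
              push_cast; ring]
            rw [Complex.norm_exp_ofReal_mul_I]
          rw [this]
          norm_num
        · rw [if_neg hcond, he]
          simp only []
          rw [spike, if_neg hcond]
          simp
    _ ≤ ∑ z : Fin n → Bool,
          2 * (2:ℝ) ^ ((n:ℝ)/4 + (n:ℝ)^a/2) * ((1:ℝ)/2) ^ hammingWeight z := by
        refine Finset.sum_le_sum fun z _ => ?_
        by_cases hcond : |(hammingWeight z : ℝ) - (n:ℝ)/4| ≤ (n:ℝ)^a/2
        · rw [if_pos hcond]
          have h1 : (hammingWeight z : ℝ) ≤ (n:ℝ)/4 + (n:ℝ)^a/2 := by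
            have := (abs_le.mp hcond).2
            linarith
          have h2 : (1:ℝ) ≤ (2:ℝ) ^ (((n:ℝ)/4 + (n:ℝ)^a/2) - (hammingWeight z : ℝ)) := by
            rw [← Real.rpow_zero 2]
            exact (Real.rpow_le_rpow_left_iff (by norm_num)).mpr (by linarith)
          have h3 : (2:ℝ) ^ (((n:ℝ)/4 + (n:ℝ)^a/2) - (hammingWeight z : ℝ))
              = (2:ℝ) ^ ((n:ℝ)/4 + (n:ℝ)^a/2) * ((1:ℝ)/2) ^ hammingWeight z := by
            rw [show ((n:ℝ)/4 + (n:ℝ)^a/2) - (hammingWeight z : ℝ)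
                = ((n:ℝ)/4 + (n:ℝ)^a/2) + (-(hammingWeight z : ℝ)) by ring,
              Real.rpow_add (by norm_num), Real.rpow_neg (by norm_num), Real.rpow_natCast,
              one_div, inv_pow]
          calc (2:ℝ) = 2 * 1 := by ring
            _ ≤ 2 * (2:ℝ) ^ (((n:ℝ)/4 + (n:ℝ)^a/2) - (hammingWeight z : ℝ)) := by linarith
            _ = 2 * (2:ℝ) ^ ((n:ℝ)/4 + (n:ℝ)^a/2) * ((1:ℝ)/2) ^ hammingWeight z := by
                rw [h3]; ring
        · rw [if_neg hcond]
          positivity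
    _ = 2 * (2:ℝ) ^ ((n:ℝ)/4 + (n:ℝ)^a/2) * (3/2)^n := by
        rw [← Finset.mul_sum, sum_half_pow]

/-- Single-round QAOA with angles `(π/4, π/2)` finds the global minimum of
the Hamming ramp with spike with probability tending to 1, for every spike
width exponent `a ∈ [0,1)` and arbitrary height exponent `b`. -/
theorem qaoa1_spike_success (a b : ℝ) (ha₀ : 0 ≤ a) (ha₁ : a < 1) :
    Tendsto (fun n : ℕ => ‖spikeQAOAState a b n (fun _ => false)‖ ^ 2)
      atTop (nhds 1) := by
  set K : ℝ := Real.log (3/2) - (3/4) * Real.log 2 with hKdef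
  have hlog2 : (0.6931471803 : ℝ) < Real.log 2 := Real.log_two_gt_d9
  have hK : K < 0 := by
    have h32 : Real.log (3/2) ≤ 1/2 := by
      have := Real.log_le_sub_one_of_pos (by norm_num : (0:ℝ) < 3/2)
      linarith
    rw [hKdef]; linarith
  clear_value K
  set G : ℕ → ℝ := fun n => K * n + (Real.log 2 / 2) * (n:ℝ)^a with hGdef
  clear_value G
  -- ε equals an exponential for n ≥ 1
  have hε : ∀ n : ℕ, 1 ≤ n →
      ((2:ℝ)^n)⁻¹ * (2 * (2:ℝ) ^ ((n:ℝ)/4 + (n:ℝ)^a/2) * (3/2)^n) = 2 * Real.exp (G n) := by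
    intro n hn
    have e1 : ((2:ℝ)^n)⁻¹ = Real.exp (-(Real.log 2 * n)) := by
      rw [← Real.rpow_natCast 2 n, Real.rpow_def_of_pos (by norm_num), Real.exp_neg]
    have e2 : (2:ℝ) ^ ((n:ℝ)/4 + (n:ℝ)^a/2)
        = Real.exp (Real.log 2 * ((n:ℝ)/4 + (n:ℝ)^a/2)) :=
      Real.rpow_def_of_pos (by norm_num) _
    have e3 : ((3:ℝ)/2)^n = Real.exp (Real.log (3/2) * n) := by
      rw [← Real.rpow_natCast (3/2 : ℝ) n, Real.rpow_def_of_pos (by norm_num)]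
    rw [e1, e2, e3, hGdef]
    rw [show (2:ℝ) * Real.exp (Real.log 2 * ((n:ℝ)/4 + (n:ℝ)^a/2)) * Real.exp (Real.log (3/2) * n)
        = 2 * (Real.exp (Real.log 2 * ((n:ℝ)/4 + (n:ℝ)^a/2)) * Real.exp (Real.log (3/2) * n)) by ring]
    rw [mul_comm (Real.exp (-(Real.log 2 * n))) _, mul_assoc, ← Real.exp_add, ← Real.exp_add]
    simp only []
    congr 1
    rw [hKdef]
    ring
  -- G tends to -∞
  have hG : Tendsto G atTop atBot := by
    have hc2 : (0:ℝ) < Real.log 2 / 2 := by linarith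
    set δ : ℝ := (-K/2) / (Real.log 2 / 2) with hδdef
    clear_value δ
    have hδ : 0 < δ := by rw [hδdef]; exact div_pos (by linarith) hc2
    have h0 : Tendsto (fun n : ℕ => ((n:ℝ))^(a-1)) atTop (nhds 0) := by
      have := (tendsto_rpow_neg_atTop (by linarith : (0:ℝ) < 1 - a)).comp
        (tendsto_natCast_atTop_atTop (R := ℝ))
      simpa [Function.comp_def, show -(1-a) = a-1 by ring] using this
    have hev : ∀ᶠ n : ℕ in atTop, G n ≤ (K/2) * n := by
      filter_upwards [h0.eventually (gt_mem_nhds hδ), Filter.eventually_ge_atTop 1]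
        with n hδn hn1
      have hnpos : (0:ℝ) < (n:ℝ) := by exact_mod_cast hn1
      have hsplit : (n:ℝ)^a = (n:ℝ)^(a-1) * (n:ℝ) := by
        nth_rewrite 3 [← Real.rpow_one (n:ℝ)]
        rw [← Real.rpow_add hnpos]
        norm_num
      have : (Real.log 2 / 2) * (n:ℝ)^a ≤ (-K/2) * n := by
        rw [hsplit]
        have h1 : (Real.log 2 / 2) * ((n:ℝ)^(a-1) * (n:ℝ))
            = ((Real.log 2 / 2) * (n:ℝ)^(a-1)) * (n:ℝ) := by ring
        rw [h1]
        refine mul_le_mul_of_nonneg_right ?_ hnpos.le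
        calc (Real.log 2 / 2) * (n:ℝ)^(a-1) ≤ (Real.log 2 / 2) * δ :=
              mul_le_mul_of_nonneg_left hδn.le hc2.le
          _ = -K/2 := by rw [hδdef]; field_simp
      rw [hGdef]
      simp only []
      linarith
    refine tendsto_atBot_mono' atTop hev ?_
    exact (tendsto_const_mul_atBot_of_neg (by linarith : K/2 < 0)).mpr
      (tendsto_natCast_atTop_atTop (R := ℝ))
  -- the error tends to 0
  have hε0 : Tendsto (fun n : ℕ =>
      ((2:ℝ)^n)⁻¹ * (2 * (2:ℝ) ^ ((n:ℝ)/4 + (n:ℝ)^a/2) * (3/2)^n)) atTop (nhds 0) := by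
    have h2 : Tendsto (fun n : ℕ => 2 * Real.exp (G n)) atTop (nhds 0) := by
      have := (Real.tendsto_exp_atBot.comp hG).const_mul (2:ℝ)
      simpa using this
    refine h2.congr' ?_
    filter_upwards [Filter.eventually_ge_atTop 1] with n hn
    exact (hε n hn).symm
  have hψ : Tendsto (fun n : ℕ => spikeQAOAState a b n (fun _ => false)) atTop (nhds 1) := by
    rw [tendsto_iff_norm_sub_tendsto_zero]
    exact squeeze_zero' (Filter.Eventually.of_forall fun n => norm_nonneg _)
      (Filter.Eventually.of_forall fun n => key_bound a b n) hε0
  have hnorm : Tendsto (fun n : ℕ => ‖spikeQAOAState a b n (fun _ => false)‖) atTop (nhds 1) := by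
    simpa using hψ.norm
  simpa using hnorm.pow 2
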